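/- Let d ≥ 3, let H be a d×d positive semidefinite Hermitian complex matrix whose smallest eigenvalue equals 0, let E > 0, and let W be a d×d complex matrix. Then for every k ≥ 1 and every unit vector Ψ ∈ ℂ^d ⊗ ℂ^k satisfying ⟨Ψ, (H ⊗ I_k)Ψ⟩ ≤ E, there exists a unit vector ψ ∈ ℂ^d with ⟨ψ, Hψ⟩ ≤ E and |⟨ψ, Wψ⟩| ≤ |⟨Ψ, (W ⊗ I_k)Ψ⟩|. In particular, the infimum of |⟨Ψ,(W⊗I_k)Ψ⟩| over all ancilla dimensions k and all energy-constrained bipartite unit vectors Ψ equals the infimum of |⟨ψ,Wψ⟩| over energy-constrained unit vectors ψ ∈ ℂ^d. -/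

import Mathlib

open Matrix Complex
open scoped ComplexOrder Kronecker

noncomputable section

local notation "conj'" => starRingEnd ℂ


section helpers
variable {d : ℕ}

lemma dot_star_comm (u v : Fin d → ℂ) : star u ⬝ᵥ v = starRingEnd ℂ (star v ⬝ᵥ u) := by
  simp [dotProduct, map_sum, mul_comm]

lemma selfdot (a : Fin d → ℂ) :
    star a ⬝ᵥ a = ((∑ i, Complex.normSq (a i) : ℝ) : ℂ) := by
  simp [dotProduct, Complex.normSq_eq_conj_mul_self]

lemma selfdot_pos (a : Fin d → ℂ) (ha : a ≠ 0) : 0 < (star a ⬝ᵥ a).re := by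
  rw [selfdot, Complex.ofReal_re]
  obtain ⟨i, hi⟩ : ∃ i, a i ≠ 0 := by
    by_contra h; push_neg at h; exact ha (funext h)
  exact Finset.sum_pos' (fun j _ => Complex.normSq_nonneg _)
    ⟨i, Finset.mem_univ i, Complex.normSq_pos.mpr hi⟩

lemma expand_form (X : Matrix (Fin d) (Fin d) ℂ) (x y : Fin d → ℂ) (z₁ z₂ : ℂ) :
    star (z₁ • x + z₂ • y) ⬝ᵥ (X *ᵥ (z₁ • x + z₂ • y)) =
      (starRingEnd ℂ z₁) * z₁ * (star x ⬝ᵥ (X *ᵥ x)) +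
      (starRingEnd ℂ z₁) * z₂ * (star x ⬝ᵥ (X *ᵥ y)) +
      (starRingEnd ℂ z₂) * z₁ * (star y ⬝ᵥ (X *ᵥ x)) +
      (starRingEnd ℂ z₂) * z₂ * (star y ⬝ᵥ (X *ᵥ y)) := by
  simp only [Matrix.mulVec_add, Matrix.mulVec_smul, star_add, star_smul,
    dotProduct_add, add_dotProduct, dotProduct_smul, smul_dotProduct,
    smul_eq_mul, RCLike.star_def]
  ring

lemma expand_norm (x y : Fin d → ℂ) (z₁ z₂ : ℂ) :
    star (z₁ • x + z₂ • y) ⬝ᵥ (z₁ • x + z₂ • y) =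
      (starRingEnd ℂ z₁) * z₁ * (star x ⬝ᵥ x) +
      (starRingEnd ℂ z₁) * z₂ * (star x ⬝ᵥ y) +
      (starRingEnd ℂ z₂) * z₁ * (star y ⬝ᵥ x) +
      (starRingEnd ℂ z₂) * z₂ * (star y ⬝ᵥ y) := by
  have := expand_form (1 : Matrix (Fin d) (Fin d) ℂ) x y z₁ z₂
  simpa [Matrix.one_mulVec] using this

lemma smul_form (X : Matrix (Fin d) (Fin d) ℂ) (a : Fin d → ℂ) (z : ℂ) :
    star (z • a) ⬝ᵥ (X *ᵥ (z • a)) = (starRingEnd ℂ z) * z * (star a ⬝ᵥ (X *ᵥ a)) := by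
  simp only [Matrix.mulVec_smul, star_smul, dotProduct_smul, smul_dotProduct,
    smul_eq_mul, RCLike.star_def]
  ring

lemma smul_norm (a : Fin d → ℂ) (z : ℂ) :
    star (z • a) ⬝ᵥ (z • a) = (starRingEnd ℂ z) * z * (star a ⬝ᵥ a) := by
  have := smul_form (1 : Matrix (Fin d) (Fin d) ℂ) a z
  simpa [Matrix.one_mulVec] using this

end helpers

/-- three complex numbers are ℝ-linearly dependent -/
lemma real_dep (z₁ z₂ z₃ : ℂ) :
    ∃ k₁ k₂ k₃ : ℝ, ¬(k₁ = 0 ∧ k₂ = 0 ∧ k₃ = 0) ∧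
      (k₁ : ℂ) * z₁ + (k₂ : ℂ) * z₂ + (k₃ : ℂ) * z₃ = 0 := by
  by_cases hD : z₁.re * z₂.im - z₁.im * z₂.re ≠ 0
  · set D := z₁.re * z₂.im - z₁.im * z₂.re with hDdef
    refine ⟨(-z₃.re * z₂.im + z₃.im * z₂.re) / D,
            (-z₁.re * z₃.im + z₁.im * z₃.re) / D, 1, by simp, ?_⟩
    apply Complex.ext <;>
      · simp only [Complex.add_re, Complex.add_im, Complex.mul_re, Complex.mul_im,
          Complex.ofReal_re, Complex.ofReal_im, Complex.one_re, Complex.one_im,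
          Complex.zero_re, Complex.zero_im]
        field_simp
        ring
  · push_neg at hD
    by_cases h1 : z₁ = 0
    · exact ⟨1, 0, 0, by simp, by simp [h1]⟩
    · have h1' : Complex.normSq z₁ ≠ 0 := (Complex.normSq_pos.mpr h1).ne'
      set r := (starRingEnd ℂ z₁ * z₂).re with hr
      have him : (starRingEnd ℂ z₁ * z₂).im = 0 := by
        simp only [Complex.mul_im, Complex.conj_re, Complex.conj_im]
        linarith [hD]
      have hre : starRingEnd ℂ z₁ * z₂ = (r : ℂ) := by
        apply Complex.ext
        · simp [hr]
        · simpa using him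
      have key : (Complex.normSq z₁ : ℂ) * z₂ = (r : ℂ) * z₁ := by
        calc (Complex.normSq z₁ : ℂ) * z₂ = z₁ * (starRingEnd ℂ z₁ * z₂) := by
              rw [← mul_assoc, Complex.mul_conj]
          _ = z₁ * (r : ℂ) := by rw [hre]
          _ = (r : ℂ) * z₁ := mul_comm _ _
      refine ⟨r / Complex.normSq z₁, -1, 0, by simp, ?_⟩
      have hns : ((Complex.normSq z₁ : ℝ) : ℂ) ≠ 0 := by exact_mod_cast h1'
      push_cast
      field_simp
      linear_combination -key


set_option maxHeartbeats 1000000 in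
/-- The Bloch-sphere chord construction, purely in scalars. -/
lemma scalar_core (W11 W12 W21 W22 H11 H12 H21 H22 : ℂ) (na nb : ℝ) (b₁ : ℂ)
    (hna : 0 < na) (hnb : 0 < nb) :
    ∃ z₁ z₂ : ℂ,
      (conj' z₁ * z₁ + conj' z₂ * z₂
        = ((na^2 + nb^2 + Complex.normSq b₁ : ℝ) : ℂ)) ∧
      (conj' z₁ * z₁ * W11 + conj' z₁ * z₂ * W12
        + conj' z₂ * z₁ * W21 + conj' z₂ * z₂ * W22
        = ((na^2 + Complex.normSq b₁ : ℝ) : ℂ) * W11 + ((nb:ℂ) * conj' b₁) * W12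
          + ((nb:ℂ) * b₁) * W21 + ((nb^2 : ℝ) : ℂ) * W22) ∧
      ((conj' z₁ * z₁ * H11 + conj' z₁ * z₂ * H12
        + conj' z₂ * z₁ * H21 + conj' z₂ * z₂ * H22).re
        ≤ (((na^2 + Complex.normSq b₁ : ℝ) : ℂ) * H11 + ((nb:ℂ) * conj' b₁) * H12
          + ((nb:ℂ) * b₁) * H21 + ((nb^2 : ℝ) : ℂ) * H22).re) := by
  obtain ⟨k₁, k₂, k₃, hk0, hk⟩ := real_dep (W12 + W21) (Complex.I * (W12 - W21)) ((W11 - W22)/2)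
  set κ : ℂ := (k₁ : ℂ) + (k₂ : ℂ) * Complex.I with hκ
  have hκre : κ.re = k₁ := by simp [hκ]
  have hκim : κ.im = k₂ := by simp [hκ]
  have hκconj : conj' κ = (k₁ : ℂ) - (k₂ : ℂ) * Complex.I := by
    simp [hκ, Complex.ext_iff]
  have hker : κ * W12 + conj' κ * W21 + ((k₃ : ℂ)/2) * (W11 - W22) = 0 := by
    rw [hκ, hκconj]; linear_combination hk
  set N : ℝ := na^2 + nb^2 + Complex.normSq b₁ with hN
  have hNpos : 0 < N := by
    rw [hN]
    have h1 := Complex.normSq_nonneg b₁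
    have h2 := pow_pos hna 2
    have h3 := pow_pos hnb 2
    linarith
  set ζ₀ : ℂ := (nb : ℂ) * conj' b₁ with hζ₀
  set m₀ : ℝ := na^2 + Complex.normSq b₁ - nb^2 with hm₀
  have hζ₀ns : Complex.normSq ζ₀ = nb^2 * Complex.normSq b₁ := by
    rw [hζ₀, Complex.normSq_mul, Complex.normSq_conj, Complex.normSq_ofReal]; ring
  set A : ℝ := 4*(k₁^2 + k₂^2) + k₃^2 with hA
  have hApos : 0 < A := by
    rcases lt_or_ge 0 A with h | h
    · exact h
    · exfalso; apply hk0
      rw [hA] at h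
      have s1 := sq_nonneg k₁
      have s2 := sq_nonneg k₂
      have s3 := sq_nonneg k₃
      have h1 : k₁^2 = 0 := le_antisymm (by linarith) s1
      have h2 : k₂^2 = 0 := le_antisymm (by linarith) s2
      have h3 : k₃^2 = 0 := le_antisymm (by linarith) s3
      exact ⟨pow_eq_zero_iff two_ne_zero |>.mp h1,
             pow_eq_zero_iff two_ne_zero |>.mp h2,
             pow_eq_zero_iff two_ne_zero |>.mp h3⟩
  set B : ℝ := 4*(ζ₀.re * k₁ + ζ₀.im * k₂) + m₀ * k₃ with hB
  set C : ℝ := 4*Complex.normSq ζ₀ + m₀^2 - N^2 with hC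
  have hCval : C = -(4*na^2*nb^2) := by
    rw [hC, hζ₀ns, hm₀, hN]; ring
  have hCneg : C < 0 := by
    rw [hCval]
    have : 0 < 4*na^2*nb^2 := by positivity
    linarith
  have hAC : A * C < 0 := mul_neg_of_pos_of_neg hApos hCneg
  set disc : ℝ := B^2 - A*C with hdisc
  have hdiscpos : 0 < disc := by rw [hdisc]; linarith [sq_nonneg B, hAC]
  set rt : ℝ := Real.sqrt disc with hrt
  have hrtnn : 0 ≤ rt := Real.sqrt_nonneg _
  have hrt2 : rt^2 = disc := Real.sq_sqrt hdiscpos.le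
  have hrtB2 : B^2 < rt^2 := by rw [hrt2, hdisc]; linarith [hAC]
  have hboth := abs_lt_of_sq_lt_sq' hrtB2 hrtnn
  have hBrt1 : B < rt := hboth.2
  have hBrt2 : -rt < B := hboth.1
  set tp : ℝ := (-B + rt)/A with htp
  set tm : ℝ := (-B - rt)/A with htm
  have htppos : 0 < tp := by rw [htp]; apply div_pos (by linarith) hApos
  have htmneg : tm < 0 := div_neg_of_neg_of_pos (by linarith) hApos
  have hroottp : A*tp^2 + 2*B*tp + C = 0 := by
    have h1 : A*tp^2 + 2*B*tp + C = (rt^2 - disc)/A := by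
      rw [htp, hdisc]; field_simp; ring
    rw [h1, hrt2, sub_self, zero_div]
  have hroottm : A*tm^2 + 2*B*tm + C = 0 := by
    have h1 : A*tm^2 + 2*B*tm + C = (rt^2 - disc)/A := by
      rw [htm, hdisc]; field_simp; ring
    rw [h1, hrt2, sub_self, zero_div]
  set lH : ℝ := (κ * H12 + conj' κ * H21 + ((k₃ : ℂ)/2) * (H11 - H22)).re with hlH
  set t : ℝ := if 0 ≤ lH then tm else tp with ht
  have htroot : A*t^2 + 2*B*t + C = 0 := by
    rw [ht]; split_ifs
    · exact hroottm
    · exact hroottp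
  have htl : t * lH ≤ 0 := by
    rw [ht]; split_ifs with h
    · exact mul_nonpos_of_nonpos_of_nonneg htmneg.le h
    · push_neg at h; exact mul_nonpos_of_nonneg_of_nonpos htppos.le h.le
  set ζs : ℂ := ζ₀ + (t : ℂ) * κ with hζs
  set ms : ℝ := m₀ + t * k₃ with hms
  have hζsre : ζs.re = ζ₀.re + t * k₁ := by simp [hζs, hκre, hκim]
  have hζsim : ζs.im = ζ₀.im + t * k₂ := by simp [hζs, hκre, hκim]
  have hsph : 4 * Complex.normSq ζs + ms^2 = N^2 := by
    have h1 : Complex.normSq ζs = ζs.re^2 + ζs.im^2 := by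
      rw [Complex.normSq_apply]; ring
    have h0 : Complex.normSq ζ₀ = ζ₀.re^2 + ζ₀.im^2 := by
      rw [Complex.normSq_apply]; ring
    rw [h1, hζsre, hζsim, hms]
    rw [hA, hB, hC, h0] at htroot
    linear_combination htroot
  have hconjζs : conj' ζs = (nb:ℂ) * b₁ + (t:ℂ) * conj' κ := by
    rw [hζs, hζ₀]
    simp [map_add, _root_.map_mul, Complex.conj_ofReal, Complex.conj_conj]
  obtain ⟨z₁, z₂, hp11, hp12, hp21, hp22⟩ :
      ∃ z₁ z₂ : ℂ, conj' z₁ * z₁ = (((N + ms)/2 : ℝ) : ℂ)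
        ∧ conj' z₁ * z₂ = ζs
        ∧ conj' z₂ * z₁ = conj' ζs
        ∧ conj' z₂ * z₂ = (((N - ms)/2 : ℝ) : ℂ) := by
    by_cases hpos : 0 < N + ms
    · set s : ℝ := Real.sqrt ((N + ms)/2) with hs
      have hspos : 0 < s := Real.sqrt_pos.mpr (by linarith)
      have hs2 : s^2 = (N+ms)/2 := Real.sq_sqrt (by linarith)
      have hsne : (s:ℂ) ≠ 0 := by exact_mod_cast hspos.ne'
      refine ⟨(s:ℂ), ζs / (s:ℂ), ?_, ?_, ?_, ?_⟩
      · rw [Complex.conj_ofReal]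
        rw [show ((s:ℂ) * (s:ℂ)) = ((s^2 : ℝ) : ℂ) by push_cast; ring, hs2]
      · rw [Complex.conj_ofReal]; field_simp
      · rw [map_div₀, Complex.conj_ofReal]; field_simp
      · rw [map_div₀, Complex.conj_ofReal]
        have hval : ((N - ms)/2) * (s^2) = Complex.normSq ζs := by
          rw [hs2]; linear_combination (-1/4 : ℝ) * hsph
        have hcm : conj' ζs * ζs = ((Complex.normSq ζs : ℝ) : ℂ) := by
          rw [← Complex.normSq_eq_conj_mul_self]
        field_simp
        rw [hcm, ← hval]
        push_cast
        ring
    · push_neg at hpos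
      have h1 : Complex.normSq ζs ≤ 0 := by
        have hNm : (0:ℝ) ≤ N - ms := by linarith
        have hprod : (N + ms) * (N - ms) ≤ 0 := mul_nonpos_of_nonpos_of_nonneg hpos hNm
        have hexp : (N + ms) * (N - ms) = N^2 - ms^2 := by ring
        linarith
      have hζs0 : ζs = 0 :=
        Complex.normSq_eq_zero.mp (le_antisymm h1 (Complex.normSq_nonneg ζs))
      have hns0 : Complex.normSq ζs = 0 := by rw [hζs0]; simp
      have hsq : ms^2 = N^2 := by rw [hns0] at hsph; linarith
      have hfac : (ms + N) * (ms - N) = 0 := by linear_combination hsq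
      have hmsN : ms = -N := by
        rcases mul_eq_zero.mp hfac with h | h
        · linarith
        · exfalso; linarith
      refine ⟨0, (Real.sqrt N : ℂ), ?_, ?_, ?_, ?_⟩
      · rw [hmsN]; simp
      · rw [hζs0]; simp
      · rw [hζs0]; simp
      · rw [Complex.conj_ofReal, hmsN]
        rw [show (N - -N)/2 = N by ring]
        rw [show ((Real.sqrt N : ℂ) * (Real.sqrt N : ℂ)) = ((Real.sqrt N * Real.sqrt N : ℝ) : ℂ) by push_cast; ring]
        rw [Real.mul_self_sqrt hNpos.le]
  have hGW : (((N + ms)/2 : ℝ) : ℂ) * W11 + ζs * W12 + conj' ζs * W21 + (((N - ms)/2 : ℝ):ℂ) * W22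
      = ((na^2 + Complex.normSq b₁ : ℝ) : ℂ) * W11 + ((nb:ℂ) * conj' b₁) * W12
        + ((nb:ℂ) * b₁) * W21 + ((nb^2:ℝ):ℂ) * W22 := by
    rw [hconjζs, hζs, hζ₀, hms, hm₀, hN]
    push_cast
    linear_combination (t:ℂ) * hker
  have hGH : ((((N + ms)/2 : ℝ) : ℂ) * H11 + ζs * H12 + conj' ζs * H21 + (((N - ms)/2 : ℝ):ℂ) * H22)
      = (((na^2 + Complex.normSq b₁ : ℝ) : ℂ) * H11 + ((nb:ℂ) * conj' b₁) * H12
        + ((nb:ℂ) * b₁) * H21 + ((nb^2:ℝ):ℂ) * H22)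
        + (t:ℂ) * (κ * H12 + conj' κ * H21 + ((k₃ : ℂ)/2) * (H11 - H22)) := by
    rw [hconjζs, hζs, hζ₀, hms, hm₀, hN]
    push_cast
    ring
  refine ⟨z₁, z₂, ?_, ?_, ?_⟩
  · rw [hp11, hp22, hN]
    push_cast
    ring
  · rw [hp11, hp12, hp21, hp22]
    exact hGW
  · rw [hp11, hp12, hp21, hp22, hGH, Complex.add_re]
    have : ((t:ℂ) * (κ * H12 + conj' κ * H21 + ((k₃ : ℂ)/2) * (H11 - H22))).re = t * lH := by
      rw [hlH, Complex.mul_re]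
      simp
    rw [this]
    linarith [htl]


set_option maxHeartbeats 1000000 in
/-- Two vectors can be merged into one, preserving the total `W`-form value and norm² exactly,
without increasing the total `H`-form real value. -/
lemma merge {d : ℕ} (W H : Matrix (Fin d) (Fin d) ℂ) (a b : Fin d → ℂ) :
    ∃ c : Fin d → ℂ,
      star c ⬝ᵥ c = star a ⬝ᵥ a + star b ⬝ᵥ b ∧
      star c ⬝ᵥ (W *ᵥ c) = star a ⬝ᵥ (W *ᵥ a) + star b ⬝ᵥ (W *ᵥ b) ∧
      (star c ⬝ᵥ (H *ᵥ c)).re ≤ (star a ⬝ᵥ (H *ᵥ a)).re + (star b ⬝ᵥ (H *ᵥ b)).re := by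
  by_cases ha : a = 0
  · refine ⟨b, ?_, ?_, ?_⟩ <;> simp [ha]
  by_cases hdep : ∃ μ : ℂ, b = μ • a
  · obtain ⟨μ, rfl⟩ := hdep
    have h0 : (0:ℝ) ≤ 1 + Complex.normSq μ := by
      have := Complex.normSq_nonneg μ; linarith
    obtain ⟨r, hrdef⟩ : ∃ r : ℝ, r = Real.sqrt (1 + Complex.normSq μ) := ⟨_, rfl⟩
    have hr2 : r^2 = 1 + Complex.normSq μ := by rw [hrdef]; exact Real.sq_sqrt h0
    have hrc : (r:ℂ) * (r:ℂ) = 1 + conj' μ * μ := by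
      rw [← Complex.normSq_eq_conj_mul_self,
        show (1 + (Complex.normSq μ : ℂ)) = ((1 + Complex.normSq μ : ℝ) : ℂ) by push_cast; ring,
        ← hr2]
      push_cast
      ring
    refine ⟨(r : ℂ) • a, ?_, ?_, ?_⟩
    · rw [smul_norm, smul_norm, Complex.conj_ofReal]
      rw [show ((r:ℂ) * (r:ℂ) * (star a ⬝ᵥ a)) = ((r:ℂ)*(r:ℂ)) * (star a ⬝ᵥ a) by ring, hrc]
      ring
    · rw [smul_form, smul_form, Complex.conj_ofReal]
      rw [show ((r:ℂ) * (r:ℂ) * (star a ⬝ᵥ (W *ᵥ a))) = ((r:ℂ)*(r:ℂ)) * (star a ⬝ᵥ (W *ᵥ a)) by ring, hrc]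
      ring
    · rw [smul_form, smul_form, Complex.conj_ofReal]
      rw [show ((r:ℂ) * (r:ℂ) * (star a ⬝ᵥ (H *ᵥ a))) = ((r:ℂ)*(r:ℂ)) * (star a ⬝ᵥ (H *ᵥ a)) by ring, hrc]
      rw [show (1 + conj' μ * μ) * (star a ⬝ᵥ (H *ᵥ a))
            = star a ⬝ᵥ (H *ᵥ a) + conj' μ * μ * (star a ⬝ᵥ (H *ᵥ a)) by ring]
      rw [Complex.add_re]
  · -- independent case
    have hapos : 0 < (star a ⬝ᵥ a).re := selfdot_pos a ha
    obtain ⟨na, hnadef⟩ : ∃ t : ℝ, t = Real.sqrt ((star a ⬝ᵥ a).re) := ⟨_, rfl⟩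
    have hnapos : 0 < na := hnadef ▸ Real.sqrt_pos.mpr hapos
    have hcna : (na:ℂ) ≠ 0 := by exact_mod_cast hnapos.ne'
    have hna2 : na^2 = (star a ⬝ᵥ a).re := hnadef ▸ Real.sq_sqrt hapos.le
    have hsa : star a ⬝ᵥ a = ((na^2 : ℝ) : ℂ) := by
      rw [hna2, selfdot]
      simp
    obtain ⟨x, hxdef⟩ : ∃ x : Fin d → ℂ, x = (na:ℂ)⁻¹ • a := ⟨_, rfl⟩
    have hx1 : star x ⬝ᵥ x = 1 := by
      rw [hxdef, smul_norm, map_inv₀, Complex.conj_ofReal, hsa]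
      field_simp
      push_cast
      ring
    obtain ⟨b₁, hb₁def⟩ : ∃ z : ℂ, z = star x ⬝ᵥ b := ⟨_, rfl⟩
    obtain ⟨y', hy'def⟩ : ∃ y' : Fin d → ℂ, y' = b - b₁ • x := ⟨_, rfl⟩
    have hy'0 : y' ≠ 0 := by
      intro h
      apply hdep
      have hb : b = b₁ • x := by
        have h2 := hy'def.symm.trans h
        exact (sub_eq_zero.mp h2)
      exact ⟨b₁ * (na:ℂ)⁻¹, by rw [hb, hxdef, smul_smul]⟩
    have hy'pos : 0 < (star y' ⬝ᵥ y').re := selfdot_pos y' hy'0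
    obtain ⟨nb, hnbdef⟩ : ∃ t : ℝ, t = Real.sqrt ((star y' ⬝ᵥ y').re) := ⟨_, rfl⟩
    have hnbpos : 0 < nb := hnbdef ▸ Real.sqrt_pos.mpr hy'pos
    have hcnb : (nb:ℂ) ≠ 0 := by exact_mod_cast hnbpos.ne'
    have hnb2 : nb^2 = (star y' ⬝ᵥ y').re := hnbdef ▸ Real.sq_sqrt hy'pos.le
    have hsy' : star y' ⬝ᵥ y' = ((nb^2 : ℝ) : ℂ) := by
      rw [hnb2, selfdot]
      simp
    obtain ⟨y, hydef⟩ : ∃ y : Fin d → ℂ, y = (nb:ℂ)⁻¹ • y' := ⟨_, rfl⟩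
    have hy1 : star y ⬝ᵥ y = 1 := by
      rw [hydef, smul_norm, map_inv₀, Complex.conj_ofReal, hsy']
      field_simp
      push_cast
      ring
    have hxy' : star x ⬝ᵥ y' = 0 := by
      rw [hy'def, dotProduct_sub, dotProduct_smul, hx1, smul_eq_mul, mul_one, hb₁def, sub_self]
    have hxy : star x ⬝ᵥ y = 0 := by
      rw [hydef, dotProduct_smul, hxy', smul_zero]
    have hyx : star y ⬝ᵥ x = 0 := by
      rw [dot_star_comm, hxy, map_zero]
    have ha_eq : a = (na:ℂ) • x := by
      rw [hxdef, smul_smul, mul_inv_cancel₀ hcna, one_smul]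
    have hnby : (nb:ℂ) • y = y' := by
      rw [hydef, smul_smul, mul_inv_cancel₀ hcnb, one_smul]
    have hb_eq : b = b₁ • x + (nb:ℂ) • y := by
      rw [hnby, hy'def]
      abel
    obtain ⟨z₁, z₂, hS1, hS2, hS3⟩ :=
      scalar_core (star x ⬝ᵥ (W *ᵥ x)) (star x ⬝ᵥ (W *ᵥ y)) (star y ⬝ᵥ (W *ᵥ x)) (star y ⬝ᵥ (W *ᵥ y))
        (star x ⬝ᵥ (H *ᵥ x)) (star x ⬝ᵥ (H *ᵥ y)) (star y ⬝ᵥ (H *ᵥ x)) (star y ⬝ᵥ (H *ᵥ y))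
        na nb b₁ hnapos hnbpos
    refine ⟨z₁ • x + z₂ • y, ?_, ?_, ?_⟩
    · rw [expand_norm, hx1, hy1, hxy, hyx]
      rw [show conj' z₁ * z₁ * 1 + conj' z₁ * z₂ * 0 + conj' z₂ * z₁ * 0 + conj' z₂ * z₂ * 1
            = conj' z₁ * z₁ + conj' z₂ * z₂ by ring, hS1]
      rw [ha_eq, hb_eq, smul_norm, expand_norm, hx1, hy1, hxy, hyx]
      simp only [Complex.conj_ofReal]
      push_cast
      rw [Complex.normSq_eq_conj_mul_self]
      ring
    · rw [expand_form, hS2]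
      rw [ha_eq, hb_eq, smul_form, expand_form]
      simp only [Complex.conj_ofReal]
      push_cast
      rw [Complex.normSq_eq_conj_mul_self]
      ring
    · have hrhs : star a ⬝ᵥ (H *ᵥ a) + star b ⬝ᵥ (H *ᵥ b)
          = ((na^2 + Complex.normSq b₁ : ℝ) : ℂ) * (star x ⬝ᵥ (H *ᵥ x))
            + ((nb:ℂ) * conj' b₁) * (star x ⬝ᵥ (H *ᵥ y))
            + ((nb:ℂ) * b₁) * (star y ⬝ᵥ (H *ᵥ x))
            + ((nb^2 : ℝ) : ℂ) * (star y ⬝ᵥ (H *ᵥ y)) := by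
        rw [ha_eq, hb_eq, smul_form, expand_form]
        simp only [Complex.conj_ofReal]
        push_cast
        rw [Complex.normSq_eq_conj_mul_self]
        ring
      rw [expand_form, show (star a ⬝ᵥ (H *ᵥ a)).re + (star b ⬝ᵥ (H *ᵥ b)).re
            = (star a ⬝ᵥ (H *ᵥ a) + star b ⬝ᵥ (H *ᵥ b)).re by rw [Complex.add_re], hrhs]
      exact hS3


lemma fold {d n : ℕ} (W H : Matrix (Fin d) (Fin d) ℂ) (f : Fin n → (Fin d → ℂ)) :
    ∃ c : Fin d → ℂ,
      star c ⬝ᵥ c = ∑ i, star (f i) ⬝ᵥ (f i) ∧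
      star c ⬝ᵥ (W *ᵥ c) = ∑ i, star (f i) ⬝ᵥ (W *ᵥ f i) ∧
      (star c ⬝ᵥ (H *ᵥ c)).re ≤ ∑ i, (star (f i) ⬝ᵥ (H *ᵥ f i)).re := by
  have key : ∀ s : Finset (Fin n), ∃ c : Fin d → ℂ,
      star c ⬝ᵥ c = ∑ i ∈ s, star (f i) ⬝ᵥ (f i) ∧
      star c ⬝ᵥ (W *ᵥ c) = ∑ i ∈ s, star (f i) ⬝ᵥ (W *ᵥ f i) ∧
      (star c ⬝ᵥ (H *ᵥ c)).re ≤ ∑ i ∈ s, (star (f i) ⬝ᵥ (H *ᵥ f i)).re := by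
    intro s
    induction s using Finset.induction_on with
    | empty => exact ⟨0, by simp, by simp, by simp⟩
    | insert j s' hnotin ih =>
      obtain ⟨c', h1, h2, h3⟩ := ih
      obtain ⟨c, g1, g2, g3⟩ := merge W H (f j) c'
      refine ⟨c, ?_, ?_, ?_⟩
      · rw [g1, h1, Finset.sum_insert hnotin]
      · rw [g2, h2, Finset.sum_insert hnotin]
      · rw [Finset.sum_insert hnotin]
        calc (star c ⬝ᵥ (H *ᵥ c)).re
            ≤ (star (f j) ⬝ᵥ (H *ᵥ f j)).re + (star c' ⬝ᵥ (H *ᵥ c')).re := g3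
          _ ≤ _ := by linarith
  exact key Finset.univ

lemma kron_form {d k : ℕ} (X : Matrix (Fin d) (Fin d) ℂ) (Ψ : Fin d × Fin k → ℂ) :
    star Ψ ⬝ᵥ ((X ⊗ₖ (1 : Matrix (Fin k) (Fin k) ℂ)) *ᵥ Ψ)
      = ∑ b : Fin k, star (fun i => Ψ (i, b)) ⬝ᵥ (X *ᵥ (fun i => Ψ (i, b))) := by
  have h1 : ∀ p : Fin d × Fin k, ((X ⊗ₖ (1 : Matrix (Fin k) (Fin k) ℂ)) *ᵥ Ψ) p
      = ∑ j, X p.1 j * Ψ (j, p.2) := by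
    intro p
    rw [Matrix.mulVec, dotProduct, Fintype.sum_prod_type]
    refine Finset.sum_congr rfl fun j _ => ?_
    simp [Matrix.one_apply, mul_ite, ite_mul, Finset.sum_ite_eq]
  calc star Ψ ⬝ᵥ ((X ⊗ₖ (1 : Matrix (Fin k) (Fin k) ℂ)) *ᵥ Ψ)
      = ∑ p : Fin d × Fin k, star Ψ p * ∑ j, X p.1 j * Ψ (j, p.2) := by
        rw [dotProduct]
        exact Finset.sum_congr rfl fun p _ => by rw [h1]
    _ = ∑ i : Fin d, ∑ b : Fin k, star Ψ (i, b) * ∑ j, X i j * Ψ (j, b) := by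
        rw [Fintype.sum_prod_type]
    _ = ∑ b : Fin k, ∑ i : Fin d, star Ψ (i, b) * ∑ j, X i j * Ψ (j, b) :=
        Finset.sum_comm
    _ = ∑ b : Fin k, star (fun i => Ψ (i, b)) ⬝ᵥ (X *ᵥ (fun i => Ψ (i, b))) := by
        refine Finset.sum_congr rfl fun b _ => ?_
        rw [dotProduct]
        refine Finset.sum_congr rfl fun i _ => ?_
        rw [Matrix.mulVec, dotProduct]
        rfl

lemma kron_dot {d k : ℕ} (Ψ : Fin d × Fin k → ℂ) :
    star Ψ ⬝ᵥ Ψ = ∑ b : Fin k, star (fun i => Ψ (i, b)) ⬝ᵥ (fun i => Ψ (i, b)) := by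
  calc star Ψ ⬝ᵥ Ψ = ∑ i : Fin d, ∑ b : Fin k, star Ψ (i, b) * Ψ (i, b) := by
        rw [dotProduct, Fintype.sum_prod_type]
    _ = ∑ b : Fin k, ∑ i : Fin d, star Ψ (i, b) * Ψ (i, b) := Finset.sum_comm
    _ = ∑ b : Fin k, star (fun i => Ψ (i, b)) ⬝ᵥ (fun i => Ψ (i, b)) := by
        refine Finset.sum_congr rfl fun b _ => ?_
        rw [dotProduct]
        rfl

/-- **Entanglement does not help in energy-constrained discrimination of unitaries
(finite dimensions).**  For a grounded Hamiltonian `H`, every energy-constrained bipartite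
unit vector `Ψ` admits an energy-constrained unit vector `ψ` on the first factor with
`|⟨ψ, W ψ⟩| ≤ |⟨Ψ, (W ⊗ I) Ψ⟩|`; consequently the two constrained infima coincide. -/
theorem energy_constrained_no_ancilla
    (d : ℕ) (hd : 3 ≤ d)
    (H : Matrix (Fin d) (Fin d) ℂ) (hH : H.PosSemidef)
    (hground : ∃ v : Fin d → ℂ, v ≠ 0 ∧ H *ᵥ v = 0)
    (E : ℝ) (hE : 0 < E)
    (W : Matrix (Fin d) (Fin d) ℂ) :
    (∀ (k : ℕ), 1 ≤ k → ∀ Ψ : Fin d × Fin k → ℂ,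
      star Ψ ⬝ᵥ Ψ = 1 →
      (star Ψ ⬝ᵥ ((H ⊗ₖ (1 : Matrix (Fin k) (Fin k) ℂ)) *ᵥ Ψ)).re ≤ E →
      ∃ ψ : Fin d → ℂ, star ψ ⬝ᵥ ψ = 1 ∧ (star ψ ⬝ᵥ (H *ᵥ ψ)).re ≤ E ∧
        ‖star ψ ⬝ᵥ (W *ᵥ ψ)‖ ≤
          ‖star Ψ ⬝ᵥ ((W ⊗ₖ (1 : Matrix (Fin k) (Fin k) ℂ)) *ᵥ Ψ)‖)
    ∧
    sInf {x : ℝ | ∃ (k : ℕ) (Ψ : Fin d × Fin k → ℂ), 1 ≤ k ∧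
        star Ψ ⬝ᵥ Ψ = 1 ∧
        (star Ψ ⬝ᵥ ((H ⊗ₖ (1 : Matrix (Fin k) (Fin k) ℂ)) *ᵥ Ψ)).re ≤ E ∧
        x = ‖star Ψ ⬝ᵥ ((W ⊗ₖ (1 : Matrix (Fin k) (Fin k) ℂ)) *ᵥ Ψ)‖}
      = sInf {x : ℝ | ∃ ψ : Fin d → ℂ, star ψ ⬝ᵥ ψ = 1 ∧
        (star ψ ⬝ᵥ (H *ᵥ ψ)).re ≤ E ∧ x = ‖star ψ ⬝ᵥ (W *ᵥ ψ)‖} := by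
  -- Part 1
  have part1 : ∀ (k : ℕ), 1 ≤ k → ∀ Ψ : Fin d × Fin k → ℂ,
      star Ψ ⬝ᵥ Ψ = 1 →
      (star Ψ ⬝ᵥ ((H ⊗ₖ (1 : Matrix (Fin k) (Fin k) ℂ)) *ᵥ Ψ)).re ≤ E →
      ∃ ψ : Fin d → ℂ, star ψ ⬝ᵥ ψ = 1 ∧ (star ψ ⬝ᵥ (H *ᵥ ψ)).re ≤ E ∧
        ‖star ψ ⬝ᵥ (W *ᵥ ψ)‖ ≤
          ‖star Ψ ⬝ᵥ ((W ⊗ₖ (1 : Matrix (Fin k) (Fin k) ℂ)) *ᵥ Ψ)‖ := by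
    intro k hk Ψ hnorm henergy
    obtain ⟨c, hc1, hc2, hc3⟩ := fold W H (fun b : Fin k => (fun i => Ψ (i, b)))
    refine ⟨c, ?_, ?_, ?_⟩
    · rw [hc1, ← kron_dot, hnorm]
    · calc (star c ⬝ᵥ (H *ᵥ c)).re
          ≤ ∑ b : Fin k, (star (fun i => Ψ (i, b)) ⬝ᵥ (H *ᵥ (fun i => Ψ (i, b)))).re := hc3
        _ = (star Ψ ⬝ᵥ ((H ⊗ₖ (1 : Matrix (Fin k) (Fin k) ℂ)) *ᵥ Ψ)).re := by
            rw [kron_form, Complex.re_sum]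
        _ ≤ E := henergy
    · have : star c ⬝ᵥ (W *ᵥ c) = star Ψ ⬝ᵥ ((W ⊗ₖ (1 : Matrix (Fin k) (Fin k) ℂ)) *ᵥ Ψ) := by
        rw [hc2, ← kron_form]
      rw [this]
  refine ⟨part1, ?_⟩
  -- ground state
  obtain ⟨v, hv0, hvH⟩ := hground
  have hvpos : 0 < (star v ⬝ᵥ v).re := selfdot_pos v hv0
  obtain ⟨nv, hnvdef⟩ : ∃ t : ℝ, t = Real.sqrt ((star v ⬝ᵥ v).re) := ⟨_, rfl⟩
  have hnvpos : 0 < nv := hnvdef ▸ Real.sqrt_pos.mpr hvpos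
  have hcnv : (nv:ℂ) ≠ 0 := by exact_mod_cast hnvpos.ne'
  have hnv2 : nv^2 = (star v ⬝ᵥ v).re := hnvdef ▸ Real.sq_sqrt hvpos.le
  have hsv : star v ⬝ᵥ v = ((nv^2 : ℝ) : ℂ) := by
    rw [hnv2, selfdot]
    simp
  have hground' : ∃ ψ : Fin d → ℂ, star ψ ⬝ᵥ ψ = 1 ∧ (star ψ ⬝ᵥ (H *ᵥ ψ)).re ≤ E := by
    refine ⟨(nv:ℂ)⁻¹ • v, ?_, ?_⟩
    · rw [smul_norm, map_inv₀, Complex.conj_ofReal, hsv]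
      field_simp
      push_cast
      ring
    · have hz : H *ᵥ ((nv:ℂ)⁻¹ • v) = 0 := by
        rw [Matrix.mulVec_smul, hvH, smul_zero]
      rw [hz, dotProduct_zero]
      simpa using hE.le
  obtain ⟨ψ₀, hψ₀1, hψ₀2⟩ := hground'
  -- the two sets
  set S1 : Set ℝ := {x : ℝ | ∃ (k : ℕ) (Ψ : Fin d × Fin k → ℂ), 1 ≤ k ∧
        star Ψ ⬝ᵥ Ψ = 1 ∧
        (star Ψ ⬝ᵥ ((H ⊗ₖ (1 : Matrix (Fin k) (Fin k) ℂ)) *ᵥ Ψ)).re ≤ E ∧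
        x = ‖star Ψ ⬝ᵥ ((W ⊗ₖ (1 : Matrix (Fin k) (Fin k) ℂ)) *ᵥ Ψ)‖} with hS1
  set S2 : Set ℝ := {x : ℝ | ∃ ψ : Fin d → ℂ, star ψ ⬝ᵥ ψ = 1 ∧
        (star ψ ⬝ᵥ (H *ᵥ ψ)).re ≤ E ∧ x = ‖star ψ ⬝ᵥ (W *ᵥ ψ)‖} with hS2
  have hbdd1 : BddBelow S1 := by
    refine ⟨0, fun x hx => ?_⟩
    obtain ⟨k, Ψ, _, _, _, hx⟩ := hx
    rw [hx]
    exact norm_nonneg _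
  have hbdd2 : BddBelow S2 := by
    refine ⟨0, fun x hx => ?_⟩
    obtain ⟨ψ, _, _, hx⟩ := hx
    rw [hx]
    exact norm_nonneg _
  -- embedding of S2 into S1 (ancilla of dimension 1)
  have hsub : S2 ⊆ S1 := by
    rintro x ⟨ψ, h1, h2, rfl⟩
    refine ⟨1, fun p => ψ p.1, le_refl 1, ?_, ?_, ?_⟩
    · rw [kron_dot]
      simpa using h1
    · rw [kron_form, Complex.re_sum]
      simpa using h2
    · rw [kron_form]
      congr 1
      simp
  have hne2 : S2.Nonempty := ⟨_, ψ₀, hψ₀1, hψ₀2, rfl⟩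
  have hne1 : S1.Nonempty := by
    obtain ⟨x, hx⟩ := hne2
    exact ⟨x, hsub hx⟩
  apply le_antisymm
  · exact csInf_le_csInf hbdd1 hne2 hsub
  · apply le_csInf hne1
    rintro x ⟨k, Ψ, hk, hΨ1, hΨ2, rfl⟩
    obtain ⟨ψ, h1, h2, h3⟩ := part1 k hk Ψ hΨ1 hΨ2
    exact le_trans (csInf_le hbdd2 ⟨ψ, h1, h2, rfl⟩) h3

end
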